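/- For every integer n ≥ 3 and all i, j ∈ {1, …, n−1} with (i,j) ≠ (n−1, n−1), the entries of the matrix C_n satisfy c^{(n)}_{i,j} + c^{(n)}_{1, i+j} = c^{(n)}_{i+1, j} + c^{(n)}_{i, j+1}, where by convention c^{(n)}_{a,b} := 0 whenever a or b lies outside {1, …, n}. -/
import Mathlib

/-- The entries `c^{(n)}_{i,j}` of the matrices `C_n`, defined by `C_1 = (1)` and
`C_{n+1} = (τ C_n) ⊕ (1)`, where `(τ A)_{i,j} = Σ_{s=i-1}^{n} a_{s,j}` (with the
convention `a_{0,j} = 0`). Entries with an index outside `{1, …, n}` are `0`. -/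
def cMat : ℕ → ℕ → ℕ → ℕ
  | 0, _, _ => 0
  | 1, i, j => if i = 1 ∧ j = 1 then 1 else 0
  | n + 2, i, j =>
      if 1 ≤ i ∧ i ≤ n + 1 ∧ 1 ≤ j ∧ j ≤ n + 1 then
        ∑ s ∈ Finset.Icc (i - 1) (n + 1), cMat (n + 1) s j
      else if i = n + 2 ∧ j = n + 2 then 1 else 0

lemma cMat_def (n i j : ℕ) :
    cMat (n + 2) i j =
      if 1 ≤ i ∧ i ≤ n + 1 ∧ 1 ≤ j ∧ j ≤ n + 1 then
        ∑ s ∈ Finset.Icc (i - 1) (n + 1), cMat (n + 1) s j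
      else if i = n + 2 ∧ j = n + 2 then 1 else 0 := rfl

lemma sum_Icc_shift (f : ℕ → ℕ) (c a b : ℕ) :
    ∑ s ∈ Finset.Icc (a + c) (b + c), f s = ∑ t ∈ Finset.Icc a b, f (t + c) := by
  rw [← Finset.map_add_right_Icc, Finset.sum_map]; rfl

lemma split_top (f : ℕ → ℕ) (a b c : ℕ) (h1 : a ≤ c) (h2 : b + 1 = c) :
    ∑ s ∈ Finset.Icc a c, f s = (∑ s ∈ Finset.Icc a b, f s) + f c := by
  subst h2; exact Finset.sum_Icc_succ_top h1 f

lemma split_bot (f : ℕ → ℕ) (a b c : ℕ) (h1 : a ≤ c) (h2 : a + 1 = b) :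
    ∑ s ∈ Finset.Icc a c, f s = f a + ∑ s ∈ Finset.Icc b c, f s := by
  subst h2
  rw [Finset.Icc_eq_cons_Ioc h1, Finset.sum_cons, Finset.Icc_add_one_left_eq_Ioc]

lemma shift' (f : ℕ → ℕ) (a b a' b' c : ℕ) (h1 : a' + c = a) (h2 : b' + c = b) :
    ∑ s ∈ Finset.Icc a b, f s = ∑ t ∈ Finset.Icc a' b', f (t + c) := by
  subst h1 h2; exact sum_Icc_shift f c a' b'

lemma cMat_row0 (n j : ℕ) : cMat n 0 j = 0 := by
  rcases n with _ | _ | m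
  · rfl
  · simp [cMat]
  · rw [cMat_def]; simp

lemma cMat_col0 (n i : ℕ) : cMat n i 0 = 0 := by
  rcases n with _ | _ | m
  · rfl
  · simp [cMat]
  · rw [cMat_def]; simp

lemma cMat_out {n i j : ℕ} (h : n < i ∨ n < j) : cMat n i j = 0 := by
  rcases n with _ | _ | m
  · rfl
  · simp only [cMat]; rw [if_neg (by omega)]
  · rw [cMat_def, if_neg (by omega), if_neg (by omega)]

lemma cMat_lastcol (n i : ℕ) (hn : 1 ≤ n) : cMat n i n = if i = n then 1 else 0 := by
  rcases n with _ | _ | m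
  · omega
  · simp [cMat]
  · rw [cMat_def, if_neg (by omega)]
    simp

lemma cMat_lastrow (n j : ℕ) (hn : 1 ≤ n) : cMat n n j = if j = n then 1 else 0 := by
  rcases n with _ | _ | m
  · omega
  · simp [cMat]
  · rw [cMat_def, if_neg (by omega)]
    simp

lemma cMat_def2 (N M i j : ℕ) (hM : N = M + 1) (h1 : 1 ≤ i) (h2 : i ≤ M)
    (h3 : 1 ≤ j) (h4 : j ≤ M) (i' : ℕ) (hi' : i' + 1 = i) :
    cMat N i j = ∑ s ∈ Finset.Icc i' M, cMat M s j := by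
  subst hM hi'
  obtain ⟨n, rfl⟩ : ∃ n, M = n + 1 := ⟨M - 1, by omega⟩
  rw [show n + 1 + 1 = n + 2 from rfl, cMat_def, if_pos ⟨h1, h2, h3, h4⟩]
  simp

lemma cMat_A : ∀ n j, 1 ≤ j → j ≤ n → cMat (n + 1) n j = 1 := by
  intro n
  induction n with
  | zero => intro j h1 h2; exact absurd (h1.trans h2) (by omega)
  | succ n ih =>
    intro j h1 h2
    show cMat (n + 2) (n + 1) j = 1
    rw [cMat_def2 (n + 2) (n + 1) (n + 1) j rfl (by omega) le_rfl h1 h2 n rfl,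
      split_top _ n n (n + 1) (by omega) rfl, Finset.Icc_self, Finset.sum_singleton,
      cMat_lastrow (n + 1) j (by omega)]
    rcases Nat.lt_or_ge j (n + 1) with h | h
    · rw [ih j h1 (by omega), if_neg (by omega)]
    · have hj : j = n + 1 := by omega
      subst hj
      rw [cMat_lastcol (n + 1) n (by omega), if_neg (by omega), if_pos rfl]

lemma cMat_col1 (n i : ℕ) (h1 : 1 ≤ i) (h2 : i ≤ n) : cMat (n + 1) i n = 1 := by
  obtain ⟨b, rfl⟩ : ∃ b, i = b + 1 := ⟨i - 1, by omega⟩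
  rw [cMat_def2 (n + 1) n (b + 1) n rfl h1 h2 (by omega) le_rfl b rfl,
    Finset.sum_congr rfl fun s _ => cMat_lastcol n s (by omega),
    Finset.sum_ite_eq' _ n (fun _ => 1), if_pos (by simp only [Finset.mem_Icc]; omega)]

lemma cMat_S : ∀ n i j, 1 ≤ i → i ≤ n + 1 → j ≤ n →
    cMat (n + 2) i (j + 1) = ∑ t ∈ Finset.Icc j (n + 1), cMat (n + 1) i t := by
  intro n
  induction n with
  | zero =>
    intro i j h1 h2 h3
    interval_cases i
    interval_cases j
    decide
  | succ n ih =>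
    intro i j h1 h2 h3
    by_cases hii : i = n + 2
    · subst hii
      show cMat (n + 3) (n + 2) (j + 1) = ∑ t ∈ Finset.Icc j (n + 2), cMat (n + 2) (n + 2) t
      have hmem : n + 2 ∈ Finset.Icc j (n + 2) := by simp only [Finset.mem_Icc]; omega
      rw [cMat_def2 (n + 3) (n + 2) (n + 2) (j + 1) rfl (by omega) le_rfl (by omega) (by omega)
          (n + 1) rfl,
        split_top _ (n + 1) (n + 1) (n + 2) (by omega) rfl, Finset.Icc_self,
        Finset.sum_singleton, cMat_lastrow (n + 2) (j + 1) (by omega),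
        Finset.sum_congr rfl fun t _ => cMat_lastrow (n + 2) t (by omega),
        Finset.sum_ite_eq' _ (n + 2) (fun _ => 1), if_pos hmem]
      rcases Nat.lt_or_ge j (n + 1) with h | h
      · rw [show cMat (n + 2) (n + 1) (j + 1) = 1 from cMat_A (n + 1) (j + 1) (by omega)
            (by omega)]
        split_ifs <;> omega
      · have hj : j = n + 1 := by omega
        rw [show j + 1 = n + 2 from by omega, cMat_lastcol (n + 2) (n + 1) (by omega)]
        split_ifs <;> omega
    · have hi2 : i ≤ n + 1 := by omega
      obtain ⟨b, rfl⟩ : ∃ b, i = b + 1 := ⟨i - 1, by omega⟩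
      by_cases hjj : j = n + 1
      · subst hjj
        show cMat (n + 3) (b + 1) (n + 2) = ∑ t ∈ Finset.Icc (n + 1) (n + 2), cMat (n + 2) (b + 1) t
        have hmem2 : n + 2 ∈ Finset.Icc b (n + 2) := by simp only [Finset.mem_Icc]; omega
        rw [cMat_def2 (n + 3) (n + 2) (b + 1) (n + 2) rfl (by omega) (by omega) (by omega) le_rfl
            b rfl,
          Finset.sum_congr rfl fun s _ => cMat_lastcol (n + 2) s (by omega),
          Finset.sum_ite_eq' _ (n + 2) (fun _ => 1), if_pos hmem2,
          split_top _ (n + 1) (n + 1) (n + 2) (by omega) rfl, Finset.Icc_self,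
          Finset.sum_singleton,
          show cMat (n + 2) (b + 1) (n + 1) = 1 from cMat_col1 (n + 1) (b + 1) (by omega) (by omega),
          cMat_lastcol (n + 2) (b + 1) (by omega), if_neg (by omega)]
      · have hj2 : j ≤ n := by omega
        show cMat (n + 3) (b + 1) (j + 1) = ∑ t ∈ Finset.Icc j (n + 2), cMat (n + 2) (b + 1) t
        have hL : ∀ s ∈ Finset.Icc b (n + 1),
            cMat (n + 2) s (j + 1) = ∑ t ∈ Finset.Icc j (n + 1), cMat (n + 1) s t := by
          intro s hs
          simp only [Finset.mem_Icc] at hs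
          rcases s with _ | k
          · simp [cMat_row0]
          · exact ih (k + 1) j (by omega) (by omega) hj2
        have hR : ∀ t ∈ Finset.Icc j (n + 1),
            cMat (n + 2) (b + 1) t = ∑ s ∈ Finset.Icc b (n + 1), cMat (n + 1) s t := by
          intro t ht
          simp only [Finset.mem_Icc] at ht
          rcases t with _ | k
          · simp [cMat_col0]
          · exact cMat_def2 (n + 2) (n + 1) (b + 1) (k + 1) rfl (by omega) (by omega) (by omega)
              (by omega) b rfl
        rw [cMat_def2 (n + 3) (n + 2) (b + 1) (j + 1) rfl (by omega) (by omega) (by omega)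
            (by omega) b rfl,
          split_top _ b (n + 1) (n + 2) (by omega) rfl,
          cMat_lastrow (n + 2) (j + 1) (by omega), if_neg (by omega), add_zero,
          Finset.sum_congr rfl hL,
          split_top _ j (n + 1) (n + 2) (by omega) rfl,
          cMat_lastcol (n + 2) (b + 1) (by omega), if_neg (by omega), add_zero,
          Finset.sum_congr rfl hR, Finset.sum_comm]

lemma cMat_rowsum (M m K : ℕ) (hK : M + 1 ≤ K) :
    (∑ k ∈ Finset.Icc (m + 1) K, cMat (M + 2) 1 k) = cMat (M + 3) 1 (m + 2) := by
  have hz : ∀ k, M + 1 < k → cMat (M + 2) 1 k = 0 := by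
    intro k hk
    rcases Nat.lt_or_ge k (M + 3) with h | h
    · rw [show k = M + 2 from by omega, cMat_lastcol (M + 2) 1 (by omega), if_neg (by omega)]
    · exact cMat_out (Or.inr (by omega))
  have trunc : ∀ K', M + 1 ≤ K' →
      (∑ k ∈ Finset.Icc (m + 1) K', cMat (M + 2) 1 k)
        = ∑ k ∈ Finset.Icc (m + 1) (M + 1), cMat (M + 2) 1 k := by
    intro K' h
    refine (Finset.sum_subset (Finset.Icc_subset_Icc_right h) ?_).symm
    intro x hx hx'
    simp only [Finset.mem_Icc] at hx hx'
    exact hz x (by omega)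
  rcases Nat.lt_or_ge m (M + 1) with h | h
  · rw [trunc K hK,
      show cMat (M + 3) 1 (m + 2) = ∑ t ∈ Finset.Icc (m + 1) (M + 2), cMat (M + 2) 1 t from
        cMat_S (M + 1) 1 (m + 1) le_rfl (by omega) (by omega),
      trunc (M + 2) (by omega)]
  · rw [Finset.sum_eq_zero fun k hk => hz k (by simp only [Finset.mem_Icc] at hk; omega)]
    rcases Nat.lt_or_ge (m + 2) (M + 4) with h2 | h2
    · rw [show m + 2 = M + 3 from by omega, cMat_lastcol (M + 3) 1 (by omega), if_neg (by omega)]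
    · rw [cMat_out (Or.inr (by omega))]

lemma cMat_star : ∀ n i j, i ≤ n → 1 ≤ j → j ≤ n →
    cMat (n + 1) (i + 1) (j + 1) = cMat n i j + cMat (n + 1) 1 (i + 1 + j) := by
  intro n
  induction n with
  | zero => intro i j hi hj1 hj2; exact absurd (hj1.trans hj2) (by omega)
  | succ n ih =>
    intro i j hi hj1 hj2
    rcases i with _ | b
    · show cMat (n + 2) 1 (j + 1) = cMat (n + 1) 0 j + cMat (n + 2) 1 (1 + j)
      rw [cMat_row0, Nat.zero_add, Nat.add_comm 1 j]
    · by_cases hj : j = n + 1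
      · subst hj
        show cMat (n + 2) (b + 2) (n + 2) = cMat (n + 1) (b + 1) (n + 1)
            + cMat (n + 2) 1 (b + 2 + (n + 1))
        rw [cMat_lastcol (n + 2) (b + 2) (by omega), cMat_lastcol (n + 1) (b + 1) (by omega),
          cMat_out (Or.inr (show n + 2 < b + 2 + (n + 1) by omega))]
        split_ifs <;> omega
      · have hj2' : j ≤ n := by omega
        by_cases hb : b = n
        · subst hb
          show cMat (b + 2) (b + 2) (j + 1) = cMat (b + 1) (b + 1) j
              + cMat (b + 2) 1 (b + 2 + j)
          rw [cMat_lastrow (b + 2) (j + 1) (by omega), cMat_lastrow (b + 1) j (by omega),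
            cMat_out (Or.inr (show b + 2 < b + 2 + j by omega)),
            if_neg (by omega), if_neg (by omega)]
        · have hb2 : b + 1 ≤ n := by omega
          obtain ⟨m, rfl⟩ : ∃ m, n = m + 1 := ⟨n - 1, by omega⟩
          show cMat (m + 3) (b + 2) (j + 1) = cMat (m + 2) (b + 1) j
              + cMat (m + 3) 1 (b + 2 + j)
          have hpt : ∀ t ∈ Finset.Icc b m,
              cMat (m + 2) (t + 1) (j + 1) = cMat (m + 1) t j + cMat (m + 2) 1 (t + 1 + j) := by
            intro t ht
            simp only [Finset.mem_Icc] at ht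
            exact ih t j (by omega) hj1 (by omega)
          have hsnd : (∑ t ∈ Finset.Icc b m, cMat (m + 2) 1 (t + 1 + j))
              = cMat (m + 3) 1 (b + j + 2) := by
            rw [Finset.sum_congr rfl fun t (_ : t ∈ Finset.Icc b m) =>
                (by rw [show t + 1 + j = t + (1 + j) from by omega] :
                  cMat (m + 2) 1 (t + 1 + j) = cMat (m + 2) 1 (t + (1 + j))),
              ← shift' (cMat (m + 2) 1) (b + (1 + j)) (m + (1 + j)) b m (1 + j) rfl rfl,
              show b + (1 + j) = b + j + 1 from by omega]
            exact cMat_rowsum m (b + j) (m + (1 + j)) (by omega)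
          have hfst : cMat (m + 2) (b + 1) j
              = (∑ t ∈ Finset.Icc b m, cMat (m + 1) t j) + (if j = m + 1 then 1 else 0) := by
            rw [cMat_def2 (m + 2) (m + 1) (b + 1) j rfl (by omega) (by omega) hj1 (by omega) b rfl,
              split_top _ b m (m + 1) (by omega) rfl, cMat_lastrow (m + 1) j (by omega)]
          rw [cMat_def2 (m + 3) (m + 2) (b + 2) (j + 1) rfl (by omega) (by omega) (by omega)
              (by omega) (b + 1) rfl,
            split_top _ (b + 1) (m + 1) (m + 2) (by omega) rfl,
            cMat_lastrow (m + 2) (j + 1) (by omega),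
            shift' _ (b + 1) (m + 1) b m 1 rfl rfl,
            Finset.sum_congr rfl hpt, Finset.sum_add_distrib, hsnd, hfst,
            show (if j + 1 = m + 2 then (1 : ℕ) else 0) = (if j = m + 1 then 1 else 0) from by
              split_ifs <;> omega,
            show b + 2 + j = b + j + 2 from by omega]
          ring

/-- For `n ≥ 3` and `i, j ∈ {1, …, n−1}` with `(i,j) ≠ (n−1,n−1)`:
`c^{(n)}_{i,j} + c^{(n)}_{1,i+j} = c^{(n)}_{i+1,j} + c^{(n)}_{i,j+1}`
(entries with an index outside `{1, …, n}` being `0`). -/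
theorem cMat_local_identity (n : ℕ) (hn : 3 ≤ n) (i j : ℕ)
    (hi : i ∈ Finset.Icc 1 (n - 1)) (hj : j ∈ Finset.Icc 1 (n - 1))
    (hij : (i, j) ≠ (n - 1, n - 1)) :
    cMat n i j + cMat n 1 (i + j) = cMat n (i + 1) j + cMat n i (j + 1) := by
  obtain ⟨m, rfl⟩ : ∃ m, n = m + 1 := ⟨n - 1, by omega⟩
  simp only [Finset.mem_Icc, Nat.add_sub_cancel] at hi hj
  have hij' : ¬(i = m ∧ j = m) := by
    intro h
    exact hij (by simp [h.1, h.2])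
  by_cases hi2 : i = m
  · rw [hi2]
    rw [show cMat (m + 1) m j = 1 from cMat_A m j (by omega) (by omega),
      show cMat (m + 1) m (j + 1) = 1 from cMat_A m (j + 1) (by omega) (by omega),
      cMat_lastrow (m + 1) j (by omega), if_neg (by omega)]
    have h0 : cMat (m + 1) 1 (m + j) = 0 := by
      rcases Nat.lt_or_ge (m + j) (m + 2) with h | h
      · rw [show m + j = m + 1 from by omega, cMat_lastcol (m + 1) 1 (by omega),
          if_neg (by omega)]
      · exact cMat_out (Or.inr (by omega))
    rw [h0]
  · have hb : i + 1 ≤ m := by omega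
    obtain ⟨b, rfl⟩ : ∃ b, i = b + 1 := ⟨i - 1, by omega⟩
    show cMat (m + 1) (b + 1) j + cMat (m + 1) 1 (b + 1 + j)
        = cMat (m + 1) (b + 2) j + cMat (m + 1) (b + 1) (j + 1)
    have hstar := cMat_star m b j (by omega) (by omega) (by omega)
    have hdiff : cMat (m + 1) (b + 1) j = cMat m b j + cMat (m + 1) (b + 2) j := by
      obtain ⟨q, hq⟩ : ∃ q, m = q + 1 := ⟨m - 1, by omega⟩
      subst hq
      rw [cMat_def2 (q + 2) (q + 1) (b + 1) j rfl (by omega) (by omega) (by omega) (by omega)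
          b rfl,
        split_bot _ b (b + 1) (q + 1) (by omega) rfl,
        cMat_def2 (q + 2) (q + 1) (b + 2) j rfl (by omega) (by omega) (by omega) (by omega)
          (b + 1) rfl]
    rw [hdiff, hstar]
    ring
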